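/- Let a, b, c, d form a 2×2 quantum matrix in an associative unital ℚ(q)-algebra. Then for all h, k ∈ ℕ with h < k and all u ∈ ℤ: d · {a; u choose k, h} = {a; u choose k, h} · d − q^{u−k+h} · {a; u − 2 choose k, h+1} · b c. (Identity (4.6) in the proof of Theorem 4.6.) -/

import Mathlib

noncomputable section

open Finset

/-- The field `ℚ(q)` of rational functions over `ℚ`. -/
abbrev 𝕂 : Type := RatFunc ℚ

/-- The indeterminate `q`. -/
def q : 𝕂 := RatFunc.X

/-- `(n)_q = 1 + q + ⋯ + q^(n-1)`. -/
def qNum (n : ℕ) : 𝕂 := ∑ i ∈ range n, q ^ i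

/-- `(n)_q! = ∏_{r=1}^n (r)_q`. -/
def qNumFac (n : ℕ) : 𝕂 := ∏ r ∈ range n, qNum (r + 1)

/-- `(n choose s)_q = (n)_q! / ((s)_q! (n-s)_q!)`. -/
def qNumBinom (n s : ℕ) : 𝕂 := qNumFac n / (qNumFac s * qNumFac (n - s))

/-- `[n]_q = (q^n - q^(-n))/(q - q⁻¹)`. -/
def qInt (n : ℕ) : 𝕂 := (q ^ n - q⁻¹ ^ n) / (q - q⁻¹)

/-- `[n]_q! = ∏_{r=1}^n [r]_q`. -/
def qIntFac (n : ℕ) : 𝕂 := ∏ r ∈ range n, qInt (r + 1)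

/-- `[n choose s]_q = [n]_q! / ([s]_q! [n-s]_q!)`. -/
def qIntBinom (n s : ℕ) : 𝕂 := qIntFac n / (qIntFac s * qIntFac (n - s))

variable {A : Type*} [Ring A] [Algebra 𝕂 A]

/-- The `q`-divided power `X^(n) = X^n / [n]_q!`. -/
def qDiv (X : A) (n : ℕ) : A := (qIntFac n)⁻¹ • X ^ n

/-- The `q`-binomial coefficient `(X ; c choose n) = ∏_{s=1}^n (q^(c+1-s) X - 1)/(q^s - 1)`. -/
def qBin (X : A) (c : ℤ) (n : ℕ) : A :=
  (∏ s ∈ range n, (q ^ (s + 1) - 1))⁻¹ •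
    ((List.range n).map (fun i => (q ^ (c - (i : ℤ)) : 𝕂) • X - 1)).prod

/-- `{X ; c choose n , r} = ∑_{s=0}^r q^(binom(s+1,2)) (r choose s)_q (X ; c+s choose n-r)`. -/
def qBrace (X : A) (c : ℤ) (n r : ℕ) : A :=
  ∑ s ∈ range (r + 1),
    (q ^ ((s + 1).choose 2) * qNumBinom r s : 𝕂) • qBin X (c + s) (n - r)

section PartOne
lemma q_ne_zero : q ≠ 0 := RatFunc.X_ne_zero

lemma qNum_ne_zero {n : ℕ} (hn : 1 ≤ n) : qNum n ≠ 0 := by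
  have h1 : qNum n = algebraMap (Polynomial ℚ) 𝕂 (∑ i ∈ range n, Polynomial.X ^ i) := by
    rw [map_sum]
    exact Finset.sum_congr rfl fun i _ => by rw [map_pow, RatFunc.algebraMap_X]; rfl
  rw [h1]
  simp only [ne_eq, map_eq_zero_iff _ (IsFractionRing.injective (Polynomial ℚ) 𝕂)]
  intro hcon
  have h2 := congrArg (Polynomial.eval 0) hcon
  rw [Polynomial.eval_finset_sum, Finset.sum_eq_single 0
    (by intro i _ hi; simp [zero_pow hi]) (fun hm => absurd (Finset.mem_range.mpr hn) hm)] at h2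
  simp at h2

lemma q_pow_sub_one_ne_zero {m : ℕ} (hm : 1 ≤ m) : q ^ m - 1 ≠ 0 := by
  have h1 : q ^ m - 1 = algebraMap (Polynomial ℚ) 𝕂 (Polynomial.X ^ m - 1) := by
    rw [map_sub, map_pow, RatFunc.algebraMap_X, map_one]; rfl
  rw [h1]
  simp only [ne_eq, map_eq_zero_iff _ (IsFractionRing.injective (Polynomial ℚ) 𝕂)]
  intro hcon
  have h2 := congrArg (Polynomial.eval 0) hcon
  simp [zero_pow (by omega : m ≠ 0)] at h2

lemma q_sq_ne_one : (q : 𝕂) ^ 2 ≠ 1 :=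
  fun hcon => q_pow_sub_one_ne_zero (m := 2) (by norm_num) (by rw [hcon, sub_self])

lemma one_sub_q_inv_sq_ne_zero : (1 - (q ^ 2)⁻¹ : 𝕂) ≠ 0 := by
  have h1 : ((q ^ 2)⁻¹ : 𝕂) ≠ 1 :=
    fun hc => q_sq_ne_one (by rw [← inv_inv (q ^ 2), hc, inv_one])
  exact sub_ne_zero.mpr (Ne.symm h1)

lemma q_sub_q_inv_ne_zero : (q - q⁻¹ : 𝕂) ≠ 0 := by
  have h1 : (q - q⁻¹ : 𝕂) = (q ^ 2 - 1) * q⁻¹ := by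
    rw [sub_mul, one_mul, sq, mul_assoc, mul_inv_cancel₀ q_ne_zero, mul_one]
  rw [h1]
  exact mul_ne_zero (sub_ne_zero.mpr q_sq_ne_one) (inv_ne_zero q_ne_zero)

lemma qNumFac_ne_zero (n : ℕ) : qNumFac n ≠ 0 :=
  Finset.prod_ne_zero_iff.2 fun i _ => qNum_ne_zero (by omega)

lemma qNum_add (a b : ℕ) : qNum (a + b) = qNum a + q ^ a * qNum b := by
  rw [qNum, Finset.sum_range_add, qNum, qNum, Finset.mul_sum]
  congr 1
  exact Finset.sum_congr rfl fun i _ => by rw [pow_add]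

lemma qNumFac_zero : qNumFac 0 = 1 := rfl

lemma qNumBinom_zero (h : ℕ) : qNumBinom h 0 = 1 := by
  rw [qNumBinom, qNumFac_zero, Nat.sub_zero, one_mul, div_self (qNumFac_ne_zero h)]

lemma qNumBinom_self (h : ℕ) : qNumBinom h h = 1 := by
  rw [qNumBinom, Nat.sub_self, qNumFac_zero, mul_one, div_self (qNumFac_ne_zero h)]

lemma qPascal {s h : ℕ} (h1 : 1 ≤ s) (h2 : s ≤ h) :
    qNumBinom (h + 1) s = qNumBinom h (s - 1) + q ^ s * qNumBinom h s := by
  obtain ⟨t, rfl⟩ : ∃ t, s = t + 1 := ⟨s - 1, by omega⟩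
  have e1 : qNumFac (h + 1) = qNumFac h * qNum (h + 1) := Finset.prod_range_succ _ _
  have e2 : qNumFac (t + 1) = qNumFac t * qNum (t + 1) := Finset.prod_range_succ _ _
  have e3 : h + 1 - (t + 1) = (h - (t+1)) + 1 := by omega
  have e4 : qNumFac ((h - (t+1)) + 1) = qNumFac (h - (t+1)) * qNum (h - (t+1) + 1) :=
    Finset.prod_range_succ _ _
  have e5 : h - t = (h - (t+1)) + 1 := by omega
  have key : qNum (h + 1) = qNum (t+1) + q ^ (t+1) * qNum (h - (t+1) + 1) := by
    rw [← qNum_add]; congr 1; omega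
  have n1 : qNum (t + 1) ≠ 0 := qNum_ne_zero (by omega)
  have n2 : qNum (h - (t+1) + 1) ≠ 0 := qNum_ne_zero (by omega)
  have n3 : qNumFac t ≠ 0 := qNumFac_ne_zero t
  have n4 : qNumFac (h - (t+1)) ≠ 0 := qNumFac_ne_zero _
  rw [qNumBinom, qNumBinom, qNumBinom, e3, e1, e2, e4, key]
  rw [show (t+1) - 1 = t from rfl, e5, e4]
  field_simp
end PartOne

section PartTwo
open Polynomial

def σ (n : ℕ) : 𝕂 := ∑ j ∈ range n, ((q ^ 2)⁻¹) ^ j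

def qd (p : Polynomial 𝕂) : Polynomial 𝕂 :=
  p.sum fun n c => Polynomial.C (c * σ n) * Polynomial.X ^ (n - 1)

lemma qd_monomial (n : ℕ) (c : 𝕂) :
    qd (monomial n c) = Polynomial.C (c * σ n) * Polynomial.X ^ (n - 1) := by
  rw [qd, Polynomial.sum_monomial_index]
  simp

lemma qd_add (p r : Polynomial 𝕂) : qd (p + r) = qd p + qd r := by
  rw [qd, qd, qd, Polynomial.sum_add_index] <;> intros <;> simp [add_mul]

variable {a b c d : A}
variable (had : d * a = a * d - ((q - q⁻¹ : 𝕂)) • (b * c))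
variable (hbca : (b * c) * a = ((q ^ 2)⁻¹ : 𝕂) • (a * (b * c)))

include had hbca in
lemma d_pow_succ (n : ℕ) :
    d * a ^ (n + 1) = a ^ (n + 1) * d
      - ((q - q⁻¹ : 𝕂) * σ (n + 1)) • (a ^ n * (b * c)) := by
  induction n with
  | zero =>
    have hσ : σ 1 = 1 := by simp [σ]
    rw [pow_one, pow_zero, one_mul, hσ, mul_one, had]
  | succ n ih =>
    have h1 : d * a ^ (n + 2) = (d * a ^ (n + 1)) * a := by
      rw [mul_assoc, ← pow_succ]
    have hda : a ^ (n+1) * d * a = a ^ (n+2) * d - (q - q⁻¹ : 𝕂) • (a^(n+1) * (b*c)) := by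
      rw [mul_assoc, had, mul_sub, ← mul_assoc, ← pow_succ, mul_smul_comm]
    have hbc' : (a ^ n * (b * c)) * a = ((q^2)⁻¹ : 𝕂) • (a^(n+1) * (b*c)) := by
      rw [mul_assoc, hbca, mul_smul_comm, ← mul_assoc, ← pow_succ]
    have e3 : σ (n + 2) = (q ^ 2)⁻¹ * σ (n + 1) + 1 := geom_sum_succ
    rw [h1, ih, sub_mul, smul_mul_assoc, hbc', smul_smul, hda, e3, sub_sub, ← add_smul,
      show ((q - q⁻¹ : 𝕂)) + (q - q⁻¹) * σ (n+1) * (q^2)⁻¹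
        = (q - q⁻¹) * ((q ^ 2)⁻¹ * σ (n + 1) + 1) by ring]

include had hbca in
lemma dcomm (p : Polynomial 𝕂) :
    d * (Polynomial.aeval a p) = (Polynomial.aeval a p) * d
      - ((q - q⁻¹ : 𝕂)) • ((Polynomial.aeval a (qd p)) * (b * c)) := by
  induction p using Polynomial.induction_on' with
  | add p r hp hr =>
    rw [map_add, qd_add, map_add, mul_add, hp, hr, add_mul, add_mul, smul_add]
    abel
  | monomial n e =>
    rw [qd_monomial, Polynomial.aeval_monomial, map_mul, map_pow, Polynomial.aeval_X,
      Polynomial.aeval_C]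
    cases n with
    | zero =>
      have hσ : σ 0 = 0 := by simp [σ]
      simp only [pow_zero, mul_one, hσ, mul_zero, map_zero, zero_mul, smul_zero, sub_zero,
        Nat.zero_sub]
      exact (Algebra.commutes e d).symm
    | succ n =>
      rw [show n + 1 - 1 = n from rfl, ← Algebra.smul_def, ← Algebra.smul_def,
        mul_smul_comm, d_pow_succ had hbca n, smul_sub, smul_smul,
        smul_mul_assoc, smul_mul_assoc, smul_smul,
        show ((q - q⁻¹ : 𝕂)) * (e * σ (n+1)) = e * ((q - q⁻¹) * σ (n+1)) by ring]

lemma qd_key (p : Polynomial 𝕂) :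
    (1 - (q ^ 2)⁻¹ : 𝕂) • (Polynomial.X * qd p)
      = p - p.comp (Polynomial.C ((q ^ 2)⁻¹ : 𝕂) * Polynomial.X) := by
  induction p using Polynomial.induction_on' with
  | add p r hp hr =>
    rw [qd_add, Polynomial.add_comp, mul_add, smul_add, hp, hr]
    abel
  | monomial n e =>
    rw [qd_monomial, Polynomial.monomial_comp]
    cases n with
    | zero =>
      have hσ : σ 0 = 0 := by simp [σ]
      simp [hσ]
    | succ n =>
      have hg : (1 - (q^2)⁻¹ : 𝕂) * σ (n+1) = 1 - ((q^2)⁻¹)^(n+1) := by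
        have h := geom_sum_mul ((q^2)⁻¹ : 𝕂) (n+1)
        rw [show σ (n+1) = ∑ i ∈ range (n+1), ((q^2)⁻¹ : 𝕂)^i from rfl]
        linear_combination -h
      have hC : Polynomial.C (1 - (q^2)⁻¹ : 𝕂) * Polynomial.C (σ (n+1))
          = 1 - Polynomial.C ((q^2)⁻¹ : 𝕂) ^ (n+1) := by
        rw [← map_mul, hg, map_sub, map_one, map_pow]
      rw [show n + 1 - 1 = n from rfl, ← C_mul_X_pow_eq_monomial,
        Polynomial.smul_eq_C_mul, map_mul]
      linear_combination (Polynomial.C e * Polynomial.X ^ (n+1)) * hC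

lemma qd_char (p r : Polynomial 𝕂)
    (hpr : p - p.comp (Polynomial.C ((q ^ 2)⁻¹ : 𝕂) * Polynomial.X)
      = (1 - (q ^ 2)⁻¹ : 𝕂) • (Polynomial.X * r)) : qd p = r := by
  have h := qd_key p
  rw [hpr] at h
  have h2 := smul_right_injective (Polynomial 𝕂) one_sub_q_inv_sq_ne_zero h
  exact mul_left_cancel₀ Polynomial.X_ne_zero h2
end PartTwo

section PartThree
open Polynomial

def qα (m : ℕ) : 𝕂 := (∏ s ∈ range m, (q ^ (s + 1) - 1))⁻¹

def BinP (c : ℤ) (m : ℕ) : Polynomial 𝕂 :=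
  Polynomial.C (qα m) * ∏ i ∈ range m, (Polynomial.C (q ^ (c - (i : ℤ)) : 𝕂) * Polynomial.X - 1)

def csc (h s : ℕ) : 𝕂 := q ^ ((s + 1).choose 2) * qNumBinom h s

def Bsum (h m : ℕ) (c : ℤ) : Polynomial 𝕂 :=
  ∑ s ∈ range (h + 1), Polynomial.C (csc h s) * BinP (c + (s : ℤ)) m

lemma qα_succ (m : ℕ) : qα m = qα (m + 1) * (q ^ (m + 1) - 1) := by
  rw [qα, qα, Finset.prod_range_succ, mul_inv, mul_assoc,
    inv_mul_cancel₀ (q_pow_sub_one_ne_zero (by omega)), mul_one]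

lemma BinP_comp (c : ℤ) (m : ℕ) :
    (BinP c m).comp (Polynomial.C ((q ^ 2)⁻¹ : 𝕂) * Polynomial.X) = BinP (c - 2) m := by
  rw [BinP, BinP, mul_comp, C_comp, Polynomial.prod_comp]
  congr 1
  refine Finset.prod_congr rfl fun i _ => ?_
  rw [sub_comp, mul_comp, C_comp, X_comp, one_comp, ← mul_assoc, ← map_mul]
  have hq2 : ((q ^ 2)⁻¹ : 𝕂) = q ^ (-2 : ℤ) := by
    rw [← zpow_natCast q 2, ← zpow_neg]
    norm_num
  rw [hq2, ← zpow_add₀ q_ne_zero, show c - (i:ℤ) + (-2) = c - 2 - i by ring]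

lemma BinP_step (c : ℤ) (m : ℕ) :
    BinP c (m + 1) - BinP (c - 1) (m + 1)
      = Polynomial.C (q ^ (c - 1 - (m : ℤ)) : 𝕂) * (Polynomial.X * BinP (c - 1) m) := by
  have hP1 : ∏ i ∈ range (m + 1), (Polynomial.C (q ^ (c - (i : ℤ)) : 𝕂) * Polynomial.X - 1)
      = (∏ i ∈ range m, (Polynomial.C (q ^ (c - 1 - (i : ℤ)) : 𝕂) * Polynomial.X - 1))
        * (Polynomial.C (q ^ c : 𝕂) * Polynomial.X - 1) := by
    rw [Finset.prod_range_succ']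
    congr 1
    · refine Finset.prod_congr rfl fun i _ => ?_
      rw [show c - ((i + 1 : ℕ) : ℤ) = c - 1 - (i : ℤ) by push_cast; ring]
    · norm_num
  have hP2 : ∏ i ∈ range (m + 1), (Polynomial.C (q ^ (c - 1 - (i : ℤ)) : 𝕂) * Polynomial.X - 1)
      = (∏ i ∈ range m, (Polynomial.C (q ^ (c - 1 - (i : ℤ)) : 𝕂) * Polynomial.X - 1))
        * (Polynomial.C (q ^ (c - 1 - (m : ℤ)) : 𝕂) * Polynomial.X - 1) :=
    Finset.prod_range_succ _ _
  have hαC : (Polynomial.C (qα m) : Polynomial 𝕂)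
      = Polynomial.C (qα (m + 1)) * Polynomial.C (q ^ (m + 1) - 1) := by
    rw [← map_mul, ← qα_succ]
  have hsc : (q ^ c : 𝕂) - q ^ (c - 1 - (m : ℤ)) = q ^ (c - 1 - (m : ℤ)) * (q ^ (m + 1) - 1) := by
    rw [mul_sub, mul_one, ← zpow_natCast q (m + 1), ← zpow_add₀ q_ne_zero,
      show c - 1 - (m : ℤ) + ((m + 1 : ℕ) : ℤ) = c by push_cast; ring]
  have hkey : (Polynomial.C (q ^ c : 𝕂) * Polynomial.X - 1)
        - (Polynomial.C (q ^ (c - 1 - (m : ℤ)) : 𝕂) * Polynomial.X - 1)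
      = Polynomial.C (q ^ (c - 1 - (m : ℤ)) : 𝕂) * Polynomial.C ((q ^ (m + 1) - 1 : 𝕂))
        * Polynomial.X := by
    rw [sub_sub_sub_cancel_right, ← sub_mul, ← map_sub, hsc, map_mul]
  rw [BinP, BinP, BinP, hP1, hP2]
  linear_combination
    (Polynomial.C (qα (m + 1))
        * ∏ i ∈ range m, (Polynomial.C (q ^ (c - 1 - (i : ℤ)) : 𝕂) * Polynomial.X - 1)) * hkey
      - (Polynomial.C (q ^ (c - 1 - (m : ℤ)) : 𝕂) * Polynomial.X
        * ∏ i ∈ range m, (Polynomial.C (q ^ (c - 1 - (i : ℤ)) : 𝕂) * Polynomial.X - 1)) * hαC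

lemma BinP_dstep (c : ℤ) (m : ℕ) :
    BinP c (m + 1) - BinP (c - 2) (m + 1)
      = Polynomial.C (q ^ (c - 1 - (m : ℤ)) : 𝕂) * (Polynomial.X * BinP (c - 1) m)
        + Polynomial.C (q ^ (c - 2 - (m : ℤ)) : 𝕂) * (Polynomial.X * BinP (c - 2) m) := by
  have h1 := BinP_step c m
  have h2 := BinP_step (c - 1) m
  rw [show c - 1 - 1 = c - 2 by ring] at h2
  linear_combination h1 + h2
end PartThree

section PartFour
open Polynomial

def Tm (u : ℤ) (m : ℕ) (j : ℕ) : Polynomial 𝕂 := Polynomial.X * BinP (u - 2 + (j : ℤ)) m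

lemma csc_zero (h : ℕ) : csc h 0 = 1 := by
  rw [csc, qNumBinom_zero]
  norm_num

lemma choose_succ (s : ℕ) : (s + 2).choose 2 = (s + 1).choose 2 + (s + 1) := by
  rw [Nat.choose_succ_succ (s + 1) 1, Nat.choose_one_right, Nat.add_comm]

lemma csc_self (h : ℕ) : csc (h + 1) (h + 1) = csc h h * q ^ (h + 1) := by
  rw [csc, csc, qNumBinom_self, qNumBinom_self, choose_succ, pow_add]
  ring

lemma csc_pascal {h s : ℕ} (hs : s < h) :
    (csc h s + csc h (s + 1)) * q ^ (s + 1) = csc (h + 1) (s + 1) := by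
  rw [csc, csc, csc, qPascal (by omega) (by omega : s + 1 ≤ h), Nat.add_sub_cancel,
    choose_succ, pow_add]
  ring

lemma star (u : ℤ) (h m : ℕ) :
    Bsum h (m + 1) u - Bsum h (m + 1) (u - 2)
      = Polynomial.C (q ^ (u - (m : ℤ) - 2) : 𝕂) * (Polynomial.X * Bsum (h + 1) m (u - 2)) := by
  have hterm : ∀ s : ℕ,
      Polynomial.C (csc h s) * BinP (u + (s : ℤ)) (m + 1)
        - Polynomial.C (csc h s) * BinP (u - 2 + (s : ℤ)) (m + 1)
      = Polynomial.C (csc h s * q ^ (u + (s : ℤ) - 1 - m)) * Tm u m (s + 1)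
        + Polynomial.C (csc h s * q ^ (u + (s : ℤ) - 2 - m)) * Tm u m s := by
    intro s
    have hd := BinP_dstep (u + (s : ℤ)) m
    rw [Tm, Tm, show u - 2 + ((s + 1 : ℕ) : ℤ) = u + (s : ℤ) - 1 by push_cast; ring,
      show u - 2 + (s : ℤ) = u + (s : ℤ) - 2 by ring, map_mul, map_mul]
    linear_combination (Polynomial.C (csc h s)) * hd
  have hR : ∀ j : ℕ,
      Polynomial.C (q ^ (u - (m : ℤ) - 2) : 𝕂)
          * (Polynomial.X * (Polynomial.C (csc (h + 1) j) * BinP (u - 2 + (j : ℤ)) m))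
      = Polynomial.C (q ^ (u - (m : ℤ) - 2) * csc (h + 1) j) * Tm u m j := by
    intro j
    rw [Tm, map_mul]
    ring
  rw [Bsum, Bsum, Bsum, ← Finset.sum_sub_distrib, Finset.mul_sum, Finset.mul_sum,
    Finset.sum_congr rfl (fun s _ => hterm s), Finset.sum_congr rfl (fun j _ => hR j),
    Finset.sum_add_distrib]
  rw [Finset.sum_range_succ
    (fun s => Polynomial.C (csc h s * q ^ (u + (s : ℤ) - 1 - m)) * Tm u m (s + 1)) h]
  rw [Finset.sum_range_succ'
    (fun s => Polynomial.C (csc h s * q ^ (u + (s : ℤ) - 2 - m)) * Tm u m s) h]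
  rw [Finset.sum_range_succ'
    (fun j => Polynomial.C (q ^ (u - (m : ℤ) - 2) * csc (h + 1) j) * Tm u m j) (h + 1)]
  rw [Finset.sum_range_succ
    (fun j => Polynomial.C (q ^ (u - (m : ℤ) - 2) * csc (h + 1) (j + 1)) * Tm u m (j + 1)) h]
  have hB0 : Polynomial.C (csc h 0 * q ^ (u + ((0 : ℕ) : ℤ) - 2 - m)) * Tm u m 0
      = Polynomial.C (q ^ (u - (m : ℤ) - 2) * csc (h + 1) 0) * Tm u m 0 := by
    rw [csc_zero, csc_zero, show u + ((0 : ℕ) : ℤ) - 2 - (m : ℤ) = u - m - 2 by push_cast; ring,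
      mul_one, one_mul]
  have hAh : Polynomial.C (csc h h * q ^ (u + (h : ℤ) - 1 - m)) * Tm u m (h + 1)
      = Polynomial.C (q ^ (u - (m : ℤ) - 2) * csc (h + 1) (h + 1)) * Tm u m (h + 1) := by
    rw [csc_self]
    congr 2
    rw [show u + (h : ℤ) - 1 - m = (u - m - 2) + ((h + 1 : ℕ) : ℤ) by push_cast; ring,
      zpow_add₀ q_ne_zero, zpow_natCast]
    ring
  have hAB : (∑ s ∈ range h, Polynomial.C (csc h s * q ^ (u + (s : ℤ) - 1 - m)) * Tm u m (s + 1))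
        + ∑ s ∈ range h, Polynomial.C (csc h (s + 1) * q ^ (u + ((s + 1 : ℕ) : ℤ) - 2 - m))
            * Tm u m (s + 1)
      = ∑ j ∈ range h, Polynomial.C (q ^ (u - (m : ℤ) - 2) * csc (h + 1) (j + 1))
          * Tm u m (j + 1) := by
    rw [← Finset.sum_add_distrib]
    refine Finset.sum_congr rfl fun s hs => ?_
    have hs' := Finset.mem_range.mp hs
    have hp := csc_pascal hs'
    have hco : csc h s * q ^ (u + (s : ℤ) - 1 - m)
          + csc h (s + 1) * q ^ (u + ((s + 1 : ℕ) : ℤ) - 2 - m)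
        = q ^ (u - (m : ℤ) - 2) * csc (h + 1) (s + 1) := by
      rw [show u + (s : ℤ) - 1 - m = (u - m - 2) + ((s + 1 : ℕ) : ℤ) by push_cast; ring,
        show u + ((s + 1 : ℕ) : ℤ) - 2 - m = (u - m - 2) + ((s + 1 : ℕ) : ℤ) by push_cast; ring,
        zpow_add₀ q_ne_zero, zpow_natCast]
      linear_combination (q ^ (u - (m : ℤ) - 2) : 𝕂) * hp
    rw [← add_mul, ← map_add, hco]
  rw [hB0, hAh]
  linear_combination hAB
end PartFour

section PartFive
open Polynomial

lemma list_prod_range' {M : Type*} [CommMonoid M] (f : ℕ → M) (n : ℕ) :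
    ((List.range n).map f).prod = ∏ i ∈ range n, f i := by
  induction n with
  | zero => simp
  | succ n ih =>
    rw [List.range_succ, List.map_append, List.prod_append, Finset.prod_range_succ, ih]
    simp

lemma map_cast_list {B : Type*} (g : ℤ → B) (n : ℕ) :
    List.map g ((List.range n).flatMap fun a => [(a : ℤ)])
      = List.map (fun i : ℕ => g i) (List.range n) := by
  induction n with
  | zero => rfl
  | succ n ih => rw [List.range_succ]; simp_all

lemma map_cast_list' {B : Type*} (g : ℤ → B) (n : ℕ) :
    List.map g (do let a ← List.range n; pure (a : ℤ))
      = List.map (fun i : ℕ => g i) (List.range n) := by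
  induction n with
  | zero => rfl
  | succ n ih => rw [List.range_succ]; simp_all

lemma aeval_BinP (a : A) (c : ℤ) (m : ℕ) : Polynomial.aeval a (BinP c m) = qBin a c m := by
  rw [BinP, map_mul, Polynomial.aeval_C, qBin, ← qα, ← Algebra.smul_def]
  congr 1
  rw [← list_prod_range' (fun i => Polynomial.C (q ^ (c - (i : ℤ)) : 𝕂) * Polynomial.X - 1) m,
    map_list_prod, List.map_map]
  congr 1
  erw [map_cast_list']
  refine List.map_congr_left fun i _ => ?_
  simp only [Function.comp_apply]
  rw [map_sub, map_mul, Polynomial.aeval_C, Polynomial.aeval_X, map_one, ← Algebra.smul_def]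

lemma aeval_Bsum (a : A) (hh m n : ℕ) (c : ℤ) (hmn : m = n - hh) :
    Polynomial.aeval a (Bsum hh m c) = qBrace a c n hh := by
  rw [Bsum, map_sum, qBrace, ← hmn]
  refine Finset.sum_congr rfl fun s _ => ?_
  rw [map_mul, Polynomial.aeval_C, aeval_BinP, ← Algebra.smul_def, csc]


/-- **Identity (4.6)** in the proof of Theorem 4.6, for a `2×2` quantum matrix. -/
theorem identity_4_6 {A : Type*} [Ring A] [Algebra 𝕂 A]
    (a b c d : A)
    (hab : a * b = q • (b * a)) (hac : a * c = q • (c * a))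
    (hbd : b * d = q • (d * b)) (hcd : c * d = q • (d * c))
    (hbc : b * c = c * b)
    (had : a * d - d * a = ((q - q⁻¹ : 𝕂)) • (b * c))
    (h k : ℕ) (hhk : h < k) (u : ℤ) :
    d * qBrace a u k h =
      qBrace a u k h * d -
        (q ^ (u - (k : ℤ) + (h : ℤ)) : 𝕂) • (qBrace a (u - 2) k (h + 1) * (b * c)) := by
  have had' : d * a = a * d - ((q - q⁻¹ : 𝕂)) • (b * c) := by
    rw [← had]; abel
  have habc : a * (b * c) = ((q ^ 2 : 𝕂)) • ((b * c) * a) := by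
    rw [← mul_assoc, hab, smul_mul_assoc, mul_assoc, hac, mul_smul_comm, smul_smul,
      ← mul_assoc, sq]
  have hbca : (b * c) * a = ((q ^ 2)⁻¹ : 𝕂) • (a * (b * c)) := by
    rw [habc, smul_smul, inv_mul_cancel₀ (pow_ne_zero 2 q_ne_zero), one_smul]
  obtain ⟨m, hm⟩ : ∃ m, k - h = m + 1 := ⟨k - h - 1, by omega⟩
  have hq1 : qBrace a u k h = Polynomial.aeval a (Bsum h (m + 1) u) :=
    (aeval_Bsum a h (m + 1) k u (by omega)).symm
  have hq2 : qBrace a (u - 2) k (h + 1) = Polynomial.aeval a (Bsum (h + 1) m (u - 2)) :=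
    (aeval_Bsum a (h + 1) m k (u - 2) (by omega)).symm
  have hchar : qd (Bsum h (m + 1) u)
      = Polynomial.C ((1 - (q ^ 2)⁻¹)⁻¹ * q ^ (u - (m : ℤ) - 2) : 𝕂)
          * Bsum (h + 1) m (u - 2) := by
    apply qd_char
    have hcomp : (Bsum h (m + 1) u).comp (Polynomial.C ((q ^ 2)⁻¹ : 𝕂) * Polynomial.X)
        = Bsum h (m + 1) (u - 2) := by
      rw [Bsum, Bsum, Polynomial.sum_comp]
      refine Finset.sum_congr rfl fun s _ => ?_
      rw [Polynomial.mul_comp, Polynomial.C_comp, BinP_comp,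
        show u + (s : ℤ) - 2 = u - 2 + s by ring]
    rw [hcomp, star, Polynomial.smul_eq_C_mul]
    have hCC : Polynomial.C ((1 : 𝕂) - (q ^ 2)⁻¹)
          * Polynomial.C ((1 - (q ^ 2)⁻¹)⁻¹ * q ^ (u - (m : ℤ) - 2) : 𝕂)
        = Polynomial.C (q ^ (u - (m : ℤ) - 2) : 𝕂) := by
      rw [← map_mul, ← mul_assoc, mul_inv_cancel₀ one_sub_q_inv_sq_ne_zero, one_mul]
    linear_combination (- (Polynomial.X * Bsum (h + 1) m (u - 2))) * hCC
  have h12 : ((1 : 𝕂) - (q ^ 2)⁻¹) = (q - q⁻¹) * q⁻¹ := by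
    rw [sub_mul, mul_inv_cancel₀ q_ne_zero, ← mul_inv, ← sq]
  have hqq : ((q : 𝕂) - q⁻¹) * (1 - (q ^ 2)⁻¹)⁻¹ = q := by
    rw [h12, mul_inv, inv_inv, ← mul_assoc, mul_inv_cancel₀ q_sub_q_inv_ne_zero, one_mul]
  have hs : ((q : 𝕂) - q⁻¹) * ((1 - (q ^ 2)⁻¹)⁻¹ * q ^ (u - (m : ℤ) - 2))
      = q ^ (u - (k : ℤ) + (h : ℤ)) := by
    rw [← mul_assoc, hqq, show u - (k : ℤ) + (h : ℤ) = 1 + (u - m - 2) by omega,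
      zpow_add₀ q_ne_zero, zpow_one]
  rw [hq1, hq2, dcomm had' hbca, hchar, map_mul, Polynomial.aeval_C, ← Algebra.smul_def,
    smul_mul_assoc, smul_smul, hs]
end PartFive

end
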